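/- Let $\lambda > 0$, let $c, d$ be real numbers with $c \ge \frac{2}{3}\lambda$ and $d \ge \frac{2}{3}\lambda$, let $r \in [0, 1]$, and let $\beta \ge 0$. Then $\frac{c + d + rc}{3} + \sqrt{\frac{\beta}{3} + \frac{1}{18}\left[(c-d)^2 + (d - rc)^2 + (c - rc)^2\right]} \;\ge\; \left(\frac{4}{9} + \frac{\sqrt{2}}{9} + \frac{2-\sqrt{2}}{9}r\right)\lambda \;\ge\; \frac{4+\sqrt{2}}{9}\lambda.$ -/

import Mathlib

/-- Key inequality in Case (2) of the proof of Property (ii) of Lemma 3.1: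
for `c, d ≥ (2/3)λ`, `r ∈ [0,1]`, `β ≥ 0`,
`(c+d+rc)/3 + √(β/3 + [(c-d)² + (d-rc)² + (c-rc)²]/18)
  ≥ (4/9 + √2/9 + (2-√2)/9 · r)λ ≥ (4+√2)/9 · λ`. -/
theorem stmt_17 (lam : ℝ) (hlam : 0 < lam) (c d : ℝ)
    (hc : 2 / 3 * lam ≤ c) (hd : 2 / 3 * lam ≤ d)
    (r : ℝ) (hr0 : 0 ≤ r) (hr1 : r ≤ 1) (β : ℝ) (hβ : 0 ≤ β) :
    (4 / 9 + Real.sqrt 2 / 9 + (2 - Real.sqrt 2) / 9 * r) * lam ≤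
      (c + d + r * c) / 3 +
        Real.sqrt (β / 3 + (1 / 18) * ((c - d) ^ 2 + (d - r * c) ^ 2 + (c - r * c) ^ 2)) ∧
    (4 + Real.sqrt 2) / 9 * lam ≤
      (4 / 9 + Real.sqrt 2 / 9 + (2 - Real.sqrt 2) / 9 * r) * lam := by
  set s := Real.sqrt 2 with hs
  have hs2 : s ^ 2 = 2 := Real.sq_sqrt (by norm_num)
  have hs1 : 1 ≤ s := by
    nlinarith [Real.sqrt_nonneg 2, hs2]
  have hs15 : s ≤ 3 / 2 := by
    nlinarith [Real.sqrt_nonneg 2, hs2]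
  have hspos : 0 < s := by linarith
  have hcpos : 0 < c := lt_of_lt_of_le (by nlinarith) hc
  have hcr : 0 ≤ (1 - r) * c := mul_nonneg (by linarith) hcpos.le
  have hsqrt : (1 - r) * c / (3 * s) ≤
      Real.sqrt (β / 3 + (1 / 18) * ((c - d) ^ 2 + (d - r * c) ^ 2 + (c - r * c) ^ 2)) := by
    rw [show (1 - r) * c / (3 * s) = Real.sqrt (((1 - r) * c / (3 * s)) ^ 2) from
      (Real.sqrt_sq (by positivity)).symm]
    apply Real.sqrt_le_sqrt
    rw [div_pow, div_le_iff₀ (by positivity)]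
    nlinarith [sq_nonneg (c - d), sq_nonneg (d - r * c), sq_nonneg ((1 - r) * c)]
  constructor
  · have key : (4 / 9 + s / 9 + (2 - s) / 9 * r) * lam ≤
        (c + d + r * c) / 3 + (1 - r) * c / (3 * s) := by
      rw [← mul_le_mul_iff_of_pos_right (by positivity : (0:ℝ) < 3 * s)]
      have expand : ((c + d + r * c) / 3 + (1 - r) * c / (3 * s)) * (3 * s) =
          s * (c + d + r * c) + (1 - r) * c := by
        field_simp
      rw [expand]
      nlinarith [mul_nonneg hspos.le (sub_nonneg.2 hc),
        mul_nonneg hspos.le (sub_nonneg.2 hd),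
        mul_nonneg (mul_nonneg hspos.le hr0) (sub_nonneg.2 hc),
        mul_nonneg (show (0:ℝ) ≤ 1 - r by linarith) (sub_nonneg.2 hc), hs2]
    linarith [hsqrt]
  · nlinarith [mul_nonneg (mul_nonneg (show (0:ℝ) ≤ 2 - s by linarith) hr0) hlam.le]
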